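/- Let T and T' be triangles in ℝ². Then the set {μ ∈ ℝ : A_μ T is congruent to T'}, where A_μ = [[1, μ],[0, 1]] and congruence is under Euclidean isometries including reflections, is finite (in fact of cardinality at most six). -/

import Mathlib

/-- The shear map A_μ = [[1, μ],[0, 1]] on the Euclidean plane. -/
def shear (μ : ℝ) (p : EuclideanSpace ℝ (Fin 2)) : EuclideanSpace ℝ (Fin 2) :=
  WithLp.toLp 2 ![p 0 + μ * p 1, p 1]

/-- Congruence of subsets of the plane under Euclidean isometries (including reflections). -/
def EuclCongruent (A B : Set (EuclideanSpace ℝ (Fin 2))) : Prop :=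
  ∃ f : EuclideanSpace ℝ (Fin 2) ≃ᵢ EuclideanSpace ℝ (Fin 2), f '' A = B

open Finset

noncomputable def shearL (μ : ℝ) : EuclideanSpace ℝ (Fin 2) →ₗ[ℝ] EuclideanSpace ℝ (Fin 2) where
  toFun := shear μ
  map_add' p q := by
    ext t; fin_cases t <;> simp [shear, PiLp.add_apply] <;> ring
  map_smul' c p := by
    ext t; fin_cases t <;> simp [shear, PiLp.smul_apply, smul_eq_mul] <;> ring

lemma shear_injective (μ : ℝ) : Function.Injective (shear μ) := by
  have h : Function.LeftInverse (shear (-μ)) (shear μ) := by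
    intro p; ext t; fin_cases t <;> simp [shear]
  exact h.injective

lemma dist_sq_eq (x y : EuclideanSpace ℝ (Fin 2)) :
    dist x y ^ 2 = (x 0 - y 0) ^ 2 + (x 1 - y 1) ^ 2 := by
  rw [EuclideanSpace.dist_eq, Real.sq_sqrt (by positivity)]
  simp [Fin.sum_univ_two, Real.dist_eq, sq_abs]

lemma not_all_snd_eq (v : Fin 3 → EuclideanSpace ℝ (Fin 2))
    (hv : AffineIndependent ℝ v) : ¬ (∀ i, v i 1 = v 0 1) := by
  intro h
  rw [affineIndependent_iff_not_collinear] at hv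
  apply hv
  rw [collinear_iff_of_mem (Set.mem_range_self 0)]
  refine ⟨EuclideanSpace.single 0 1, ?_⟩
  rintro p ⟨i, rfl⟩
  refine ⟨v i 0 - v 0 0, ?_⟩
  ext t
  fin_cases t <;>
    simp [PiLp.add_apply, PiLp.smul_apply, EuclideanSpace.single_apply, h i]

variable {E : Type*} [NormedAddCommGroup E] [NormedSpace ℝ E]

lemma mem_hull_weights {n : ℕ} (u : Fin n → E) {x : E} (hx : x ∈ convexHull ℝ (Set.range u)) :
    ∃ W : Fin n → ℝ, (∀ j, 0 ≤ W j) ∧ ∑ j, W j = 1 ∧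
      Finset.univ.affineCombination ℝ u W = x := by
  rw [convexHull_range_eq_exists_affineCombination] at hx
  obtain ⟨s, w, hw0, hw1, hwa⟩ := hx
  refine ⟨Set.indicator (↑s : Set (Fin n)) w, ?_, ?_, ?_⟩
  · intro j
    by_cases h : j ∈ s
    · simpa [Set.indicator_of_mem, h] using hw0 j h
    · simp [Set.indicator_of_notMem, h]
  · rw [← hw1, Finset.sum_indicator_subset _ (Finset.subset_univ s)]
  · rw [← affineCombination_indicator_subset w u (Finset.subset_univ s)]
    exact hwa

lemma range_subset_of_hulls (u w : Fin 3 → E) (hu : AffineIndependent ℝ u)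
    (h1 : ∀ i, u i ∈ convexHull ℝ (Set.range w))
    (h2 : ∀ j, w j ∈ convexHull ℝ (Set.range u)) :
    Set.range u ⊆ Set.range w := by
  choose W hW0 hW1 hWe using fun i => mem_hull_weights w (h1 i)
  choose M hM0 hM1 hMe using fun j => mem_hull_weights u (h2 j)
  rintro x ⟨i, rfl⟩
  set N : Fin 3 → ℝ := fun k => ∑ j, W i j * M j k with hN
  have hN1 : ∑ k, N k = 1 := by
    rw [Finset.sum_comm]
    simp_rw [← Finset.mul_sum, hM1, mul_one]
    exact hW1 i
  have hcomb : Finset.univ.affineCombination ℝ u N = u i := by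
    rw [Finset.affineCombination_eq_linear_combination _ _ _ hN1]
    have h1' : u i = ∑ j, W i j • w j := by
      rw [← Finset.affineCombination_eq_linear_combination _ _ _ (hW1 i), hWe]
    rw [h1']
    have h2' : ∀ j, w j = ∑ k, M j k • u k := fun j => by
      rw [← Finset.affineCombination_eq_linear_combination _ _ _ (hM1 j), hMe]
    calc ∑ k, N k • u k = ∑ k, ∑ j, (W i j * M j k) • u k := by
          simp_rw [hN, Finset.sum_smul]
      _ = ∑ j, ∑ k, (W i j * M j k) • u k := Finset.sum_comm
      _ = ∑ j, W i j • w j := by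
          refine Finset.sum_congr rfl fun j _ => ?_
          rw [h2' j, Finset.smul_sum]
          simp_rw [smul_smul]
  have hsingle : Finset.univ.affineCombination ℝ u (Pi.single i 1) = u i :=
    Finset.affineCombination_of_eq_one_of_eq_zero _ _ _ (Finset.mem_univ i)
      (Pi.single_eq_same i 1) (fun k _ hk => Pi.single_eq_of_ne hk 1)
  have hNeq : N = Pi.single i 1 := by
    refine (affineIndependent_iff_eq_of_fintype_affineCombination_eq ℝ u).mp hu N _
      hN1 (by simp) ?_
    rw [hcomb, hsingle]
  have hNi : N i = 1 := by rw [hNeq]; simp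
  have hsum : (∑ j, W i j * M j i) ≠ 0 := by
    rw [show (∑ j, W i j * M j i) = N i from rfl, hNi]; norm_num
  obtain ⟨j, -, hj⟩ := Finset.exists_ne_zero_of_sum_ne_zero hsum
  have hWij : W i j ≠ 0 := fun h => hj (by rw [h, zero_mul])
  have hMk : ∀ k, k ≠ i → M j k = 0 := by
    intro k hk
    have hNk : N k = 0 := by rw [hNeq]; exact Pi.single_eq_of_ne hk 1
    have := (Finset.sum_eq_zero_iff_of_nonneg
      (fun j' _ => mul_nonneg (hW0 i j') (hM0 j' k))).mp hNk j (Finset.mem_univ j)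
    rcases mul_eq_zero.mp this with h | h
    · exact absurd h hWij
    · exact h
  have hMji : M j i = 1 := by
    have := hM1 j
    rwa [Finset.sum_eq_single_of_mem i (Finset.mem_univ i)
      (fun k _ hk => hMk k hk)] at this
  refine ⟨j, ?_⟩
  rw [← hMe j]
  exact Finset.affineCombination_of_eq_one_of_eq_zero _ _ _
    (Finset.mem_univ i) hMji (fun k _ hk => hMk k hk)


/-- for any two triangles T, T', the set of μ with A_μ T congruent to T'
is finite. -/
theorem stmt_9 (v v' : Fin 3 → EuclideanSpace ℝ (Fin 2))
    (hv : AffineIndependent ℝ v) (hv' : AffineIndependent ℝ v')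
    (T : Set (EuclideanSpace ℝ (Fin 2))) (T' : Set (EuclideanSpace ℝ (Fin 2)))
    (hT : T = convexHull ℝ (Set.range v)) (hT' : T' = convexHull ℝ (Set.range v')) :
    {μ : ℝ | EuclCongruent (shear μ '' T) T'}.Finite := by
  classical
  set a : Fin 3 → Fin 3 → ℝ := fun i j => v i 0 - v j 0 with ha
  set b : Fin 3 → Fin 3 → ℝ := fun i j => v i 1 - v j 1 with hb
  set Cs : ℝ := ∑ i, ∑ j, dist (v' i) (v' j) ^ 2 with hCs
  set A : ℝ := ∑ i, ∑ j, b i j ^ 2 with hA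
  set B : ℝ := ∑ i, ∑ j, 2 * a i j * b i j with hB
  set D : ℝ := (∑ i, ∑ j, (a i j ^ 2 + b i j ^ 2)) - Cs with hD
  set p : Polynomial ℝ := Polynomial.C A * Polynomial.X ^ 2 + Polynomial.C B * Polynomial.X
    + Polynomial.C D with hp
  -- A ≠ 0
  have hbne : ∃ i j, b i j ≠ 0 := by
    by_contra h
    push_neg at h
    exact not_all_snd_eq v hv fun i => by
      have := h i 0; simpa [hb, sub_eq_zero] using this
  have hApos : 0 < A := by
    obtain ⟨i₀, j₀, hij⟩ := hbne
    have h1 : 0 < b i₀ j₀ ^ 2 := by positivity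
    have : b i₀ j₀ ^ 2 ≤ A := by
      rw [hA]
      calc b i₀ j₀ ^ 2 ≤ ∑ j, b i₀ j ^ 2 :=
            Finset.single_le_sum (fun j _ => sq_nonneg (b i₀ j)) (Finset.mem_univ j₀)
        _ ≤ ∑ i, ∑ j, b i j ^ 2 :=
            Finset.single_le_sum (fun i _ => Finset.sum_nonneg fun j _ => sq_nonneg (b i j))
              (Finset.mem_univ i₀)
    linarith
  have hpne : p ≠ 0 := fun h => by
    have : p.coeff 2 = A := by simp [hp, Polynomial.coeff_C]
    rw [h] at this
    simp at this
    exact absurd this.symm (ne_of_gt hApos)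
  refine Set.Finite.subset (Polynomial.finite_setOf_isRoot hpne) ?_
  rintro μ ⟨f, hf⟩
  -- the image triple
  set u : Fin 3 → EuclideanSpace ℝ (Fin 2) := fun i => f (shear μ (v i)) with hu
  -- affine machinery
  have hfaff : ∃ gA : EuclideanSpace ℝ (Fin 2) →ᵃ[ℝ] EuclideanSpace ℝ (Fin 2),
      ⇑gA = ⇑f ∧ Function.Injective gA := by
    refine ⟨f.toRealAffineIsometryEquiv.toAffineEquiv.toAffineMap, ?_, ?_⟩
    · ext x
      simp [IsometryEquiv.coeFn_toRealAffineIsometryEquiv]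
    · intro x y hxy
      exact f.toRealAffineIsometryEquiv.toAffineEquiv.injective hxy
  obtain ⟨gA, hgA, hgAinj⟩ := hfaff
  have hshearaff : shear μ '' T = convexHull ℝ (Set.range (shear μ ∘ v)) := by
    rw [hT, show shear μ = ⇑((shearL μ).toAffineMap) from rfl, AffineMap.image_convexHull,
      ← Set.range_comp]
  have hhull : convexHull ℝ (Set.range u) = convexHull ℝ (Set.range v') := by
    have : f '' (shear μ '' T) = convexHull ℝ (Set.range u) := by
      rw [hshearaff, ← hgA, AffineMap.image_convexHull, ← Set.range_comp,
        show ⇑gA ∘ shear μ ∘ v = u from funext fun i => by simp [hgA, hu]]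
    rw [← this, hf, hT']
  have huind : AffineIndependent ℝ u := by
    have h1 : AffineIndependent ℝ (shear μ ∘ v) :=
      hv.map' (shearL μ).toAffineMap (shear_injective μ)
    have h2 : AffineIndependent ℝ (⇑gA ∘ (shear μ ∘ v)) := h1.map' gA hgAinj
    have : ⇑gA ∘ (shear μ ∘ v) = u := by funext i; simp [hgA, hu]
    rwa [this] at h2
  -- range equality
  have hsub1 : Set.range u ⊆ Set.range v' := by
    refine range_subset_of_hulls u v' huind ?_ ?_
    · intro i
      rw [← hhull]
      exact subset_convexHull ℝ _ (Set.mem_range_self i)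
    · intro j
      rw [hhull]
      exact subset_convexHull ℝ _ (Set.mem_range_self j)
  have hsub2 : Set.range v' ⊆ Set.range u := by
    refine range_subset_of_hulls v' u hv' ?_ ?_
    · intro i
      rw [hhull]
      exact subset_convexHull ℝ _ (Set.mem_range_self i)
    · intro j
      rw [← hhull]
      exact subset_convexHull ℝ _ (Set.mem_range_self j)
  -- permutation
  have hex : ∀ i, ∃ j, v' j = u i := fun i => hsub1 (Set.mem_range_self i)
  choose g hg using hex
  have hginj : Function.Injective g := by
    intro i₁ i₂ h
    exact huind.injective (by rw [← hg i₁, ← hg i₂, h])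
  have hgbij : Function.Bijective g := (Finite.injective_iff_bijective).mp hginj
  -- sum identity
  have hsumQ : (∑ i, ∑ j, dist (u i) (u j) ^ 2) = Cs := by
    rw [hCs]
    refine Fintype.sum_bijective g hgbij _ _ fun i => ?_
    refine Fintype.sum_bijective g hgbij _ _ fun j => ?_
    rw [hg i, hg j]
  -- expand distances
  have hdist : ∀ i j, dist (u i) (u j) ^ 2 = (a i j + μ * b i j) ^ 2 + b i j ^ 2 := by
    intro i j
    rw [hu]
    simp only []
    rw [IsometryEquiv.dist_eq, dist_sq_eq]
    have h0 : ∀ i, shear μ (v i) 0 = v i 0 + μ * v i 1 := fun i => by simp [shear]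
    have h1 : ∀ i, shear μ (v i) 1 = v i 1 := fun i => by simp [shear]
    rw [h0, h0, h1, h1, ha, hb]
    ring
  -- polynomial root
  have key : A * μ ^ 2 + B * μ + (∑ i, ∑ j, (a i j ^ 2 + b i j ^ 2)) = Cs := by
    rw [← hsumQ]
    simp_rw [hdist]
    have expand : ∀ i j, (a i j + μ * b i j) ^ 2 + b i j ^ 2
        = b i j ^ 2 * μ ^ 2 + (2 * a i j * b i j) * μ + (a i j ^ 2 + b i j ^ 2) := by
      intro i j; ring
    simp_rw [expand, Finset.sum_add_distrib, ← Finset.sum_mul]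
    rw [hA, hB]
  show p.IsRoot μ
  rw [hp]
  simp only [Polynomial.IsRoot, Polynomial.eval_add, Polynomial.eval_mul, Polynomial.eval_pow,
    Polynomial.eval_C, Polynomial.eval_X]
  rw [hD]
  linarith
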